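/- For every real s > 0 and all x, y with 0 ≤ y ≤ x ≤ 1, the modulus of the complex number g(√(is),x,y) satisfies |g(√(is),x,y)| = √[ (cos(√2·√s·(x−1)) − cosh(√2·√s·(x−1)))·(cos(√2·√s·y) − cosh(√2·√s·y)) / (2·s·(cosh(√2·√s) − cos(√2·√s))) ]. -/

import Mathlib

open MeasureTheory Set Filter
open scoped Real Topology

/-- The Green's function `g(m,x,y)` for complex parameter `m`, with
`g(0,x,y)` given by the triangular kernel. -/
noncomputable def gC (m : ℂ) (x y : ℝ) : ℂ :=
  if m = 0 then
    (((if y ≤ x then (1 - x) * y else x * (1 - y)) : ℝ) : ℂ)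
  else if y ≤ x then
    -(Complex.sinh (m * ((x : ℂ) - 1)) * Complex.sinh (m * (y : ℂ))) / (m * Complex.sinh m)
  else
    -(Complex.sinh (m * (x : ℂ)) * Complex.sinh (m * ((y : ℂ) - 1))) / (m * Complex.sinh m)

/-- `√(is) = (1+i)·√|s|/√2` for real `s`. -/
noncomputable def sqrtis (s : ℝ) : ℂ :=
  (1 + Complex.I) * (Real.sqrt |s| : ℂ) / (Real.sqrt 2 : ℂ)

lemma normSq_sinh_one_add_I (a : ℝ) :
    Complex.normSq (Complex.sinh ((1 + Complex.I) * a)) =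
      (Real.cosh (2*a) - Real.cos (2*a)) / 2 := by
  have h : (1 + Complex.I) * (a : ℂ) = (a : ℂ) + (a : ℂ) * Complex.I := by ring
  rw [h, Complex.sinh_add, Complex.cosh_mul_I, Complex.sinh_mul_I,
    ← Complex.ofReal_sinh, ← Complex.ofReal_cos, ← Complex.ofReal_cosh,
    ← Complex.ofReal_sin]
  have h2 : (Real.sinh a : ℂ) * (Real.cos a : ℂ) + ↑(Real.cosh a) * (↑(Real.sin a) * Complex.I)
      = ((Real.sinh a * Real.cos a : ℝ) : ℂ) + ((Real.cosh a * Real.sin a : ℝ) : ℂ) * Complex.I := by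
    push_cast; ring
  rw [h2, Complex.normSq_add_mul_I]
  have hc2 : Real.cos (2*a) = 2 * Real.cos a ^2 - 1 := by
    rw [two_mul, Real.cos_add]; ring_nf; nlinarith [Real.sin_sq_add_cos_sq a]
  have hch2 : Real.cosh (2*a) = 2 * Real.cosh a ^2 - 1 := by
    rw [two_mul, Real.cosh_add]; nlinarith [Real.cosh_sq a]
  nlinarith [Real.sin_sq_add_cos_sq a, Real.cosh_sq a]

/-- For `s > 0` and `0 ≤ y ≤ x ≤ 1`, the modulus of `g(√(is),x,y)`
is given by
`|g(√(is),x,y)| = √( (cos(√2 √s (x−1)) − cosh(√2 √s (x−1))) (cos(√2 √s y) − cosh(√2 √s y))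
  / (2 s (cosh(√2 √s) − cos(√2 √s))) )`. -/
theorem gC_abs_formula (s : ℝ) (hs : 0 < s) (x y : ℝ)
    (hy0 : 0 ≤ y) (hyx : y ≤ x) (hx1 : x ≤ 1) :
    ‖gC (sqrtis s) x y‖ =
      Real.sqrt
        ((Real.cos (Real.sqrt 2 * Real.sqrt s * (x - 1)) -
            Real.cosh (Real.sqrt 2 * Real.sqrt s * (x - 1))) *
          (Real.cos (Real.sqrt 2 * Real.sqrt s * y) -
            Real.cosh (Real.sqrt 2 * Real.sqrt s * y)) /
          (2 * s * (Real.cosh (Real.sqrt 2 * Real.sqrt s) -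
            Real.cos (Real.sqrt 2 * Real.sqrt s)))) := by
  have hs' : (0:ℝ) ≤ s := hs.le
  set σ := Real.sqrt s with hσdef
  have hσpos : 0 < σ := Real.sqrt_pos.mpr hs
  have hσsq : σ ^ 2 = s := Real.sq_sqrt hs'
  have h2pos : (0:ℝ) < Real.sqrt 2 := Real.sqrt_pos.mpr (by norm_num)
  have h22 : Real.sqrt 2 * Real.sqrt 2 = 2 := Real.mul_self_sqrt (by norm_num)
  set c := σ / Real.sqrt 2 with hc
  have hcpos : 0 < c := div_pos hσpos h2pos
  have h2c : 2 * c = Real.sqrt 2 * σ := by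
    rw [hc]; field_simp; nlinarith
  have hm : sqrtis s = (1 + Complex.I) * (c : ℂ) := by
    unfold sqrtis
    rw [abs_of_pos hs]
    push_cast [hc]
    ring
  have hmne : sqrtis s ≠ 0 := by
    rw [hm]
    apply mul_ne_zero
    · intro h
      have := congrArg Complex.im h
      simp at this
    · exact_mod_cast hcpos.ne'
  have hnm : Complex.normSq (sqrtis s) = s := by
    rw [hm, map_mul, Complex.normSq_ofReal, Complex.normSq_apply]
    simp only [Complex.add_re, Complex.add_im, Complex.one_re, Complex.one_im, Complex.I_re,
      Complex.I_im]
    have : c * c = s / 2 := by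
      rw [hc]; field_simp; nlinarith
    nlinarith
  -- rewrite the three sinh arguments
  have e1 : sqrtis s * ((x:ℂ) - 1) = (1 + Complex.I) * ((c * (x-1) : ℝ) : ℂ) := by
    rw [hm]; push_cast; ring
  have e2 : sqrtis s * (y:ℂ) = (1 + Complex.I) * ((c * y : ℝ) : ℂ) := by
    rw [hm]; push_cast; ring
  have e3 : sqrtis s = (1 + Complex.I) * ((c : ℝ) : ℂ) := hm
  have nA : Complex.normSq (Complex.sinh (sqrtis s * ((x:ℂ) - 1))) =
      (Real.cosh (Real.sqrt 2 * σ * (x-1)) - Real.cos (Real.sqrt 2 * σ * (x-1))) / 2 := by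
    rw [e1, normSq_sinh_one_add_I]
    have : 2 * (c * (x-1)) = Real.sqrt 2 * σ * (x-1) := by rw [← h2c]; ring
    rw [this]
  have nB : Complex.normSq (Complex.sinh (sqrtis s * (y:ℂ))) =
      (Real.cosh (Real.sqrt 2 * σ * y) - Real.cos (Real.sqrt 2 * σ * y)) / 2 := by
    rw [e2, normSq_sinh_one_add_I]
    have : 2 * (c * y) = Real.sqrt 2 * σ * y := by rw [← h2c]; ring
    rw [this]
  have nC : Complex.normSq (Complex.sinh (sqrtis s)) =
      (Real.cosh (Real.sqrt 2 * σ) - Real.cos (Real.sqrt 2 * σ)) / 2 := by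
    conv_lhs => rw [e3]
    rw [normSq_sinh_one_add_I, h2c]
  have hCpos : 0 < Real.cosh (Real.sqrt 2 * σ) - Real.cos (Real.sqrt 2 * σ) := by
    have h1 : 1 < Real.cosh (Real.sqrt 2 * σ) :=
      Real.one_lt_cosh.mpr (by positivity)
    have h2 : Real.cos (Real.sqrt 2 * σ) ≤ 1 := Real.cos_le_one _
    linarith
  rw [Complex.norm_def]
  congr 1
  simp only [gC, if_neg hmne, if_pos hyx]
  rw [map_div₀ Complex.normSq, Complex.normSq_neg, map_mul, map_mul, nA, nB, nC, hnm]
  field_simp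
  ring
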